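/- Let σ ≥ 0 and let μ be a complex measure on the Borel σ-algebra of [0,1) whose total variation satisfies |μ|([x,1)) ≤ K(1−x)^σ for some constant K < ∞ and all x ∈ [0,1). Define u_m = ∫_{[0,1)} x^m dμ(x) for real m ≥ 0 and E(t) = ∫_{[0,1)} e^{tx} dμ(x). Then u_m = e^{−m} E(m) + O(m^{−(1+σ)}) as m → ∞; i.e., there exist C < ∞ and m₀ such that |u_m − e^{−m}E(m)| ≤ C m^{−(1+σ)} for all real m ≥ m₀. -/

import Mathlib

open MeasureTheory Filter Set

lemma aux_u_exp {u : ℝ} (hu : 0 ≤ u) : u * Real.exp (-u) ≤ Real.exp (-1) := by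
  have h1 : u ≤ Real.exp (u - 1) := by
    have := Real.add_one_le_exp (u - 1); linarith
  calc u * Real.exp (-u) ≤ Real.exp (u - 1) * Real.exp (-u) :=
        mul_le_mul_of_nonneg_right h1 (Real.exp_pos _).le
    _ = Real.exp (-1) := by rw [← Real.exp_add]; ring_nf

lemma aux_t2 {t : ℝ} (ht : 0 ≤ t) : t ^ 2 * Real.exp (-t) ≤ 4 * Real.exp (-2) := by
  have h1 : (t/2) * Real.exp (-(t/2)) ≤ Real.exp (-1) := aux_u_exp (by linarith)
  have h2 : Real.exp (-t) = Real.exp (-(t/2)) * Real.exp (-(t/2)) := by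
    rw [← Real.exp_add]; ring_nf
  have h3 : Real.exp (-2) = Real.exp (-1) * Real.exp (-1) := by
    rw [← Real.exp_add]; norm_num
  have h4 := mul_le_mul h1 h1 (by positivity) (Real.exp_pos (-1)).le
  rw [h2, h3]; nlinarith [h4]

lemma aux_pointwise {m x : ℝ} (hm : 1 ≤ m) (hx0 : 0 ≤ x) (hx1 : x < 1) :
    |x ^ m - Real.exp (m * x - m)| ≤
      16 / Real.exp 2 * m⁻¹ * Real.exp (-(m * (1 - x)) / 2) := by
  have hm0 : (0:ℝ) < m := lt_of_lt_of_le one_pos hm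
  have hxe : x ≤ Real.exp (x - 1) := by
    have := Real.add_one_le_exp (x - 1); linarith
  have hlow : x ^ m ≤ Real.exp (m * x - m) := by
    calc x ^ m ≤ (Real.exp (x - 1)) ^ m := Real.rpow_le_rpow hx0 hxe hm0.le
      _ = Real.exp ((x - 1) * m) := (Real.exp_mul _ _).symm
      _ = Real.exp (m * x - m) := by ring_nf
  set a := x * Real.exp (1 - x) with ha_def
  have ha0 : 0 ≤ a := by positivity
  have ha1 : a ≤ 1 := by
    have h := mul_le_mul_of_nonneg_right hxe (Real.exp_pos (1 - x)).le
    rw [← Real.exp_add] at h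
    have e : (x - 1) + (1 - x) = 0 := by ring
    rw [e, Real.exp_zero] at h
    exact h
  have hbern : 1 + m * (a - 1) ≤ a ^ m := by
    have h := one_add_mul_self_le_rpow_one_add (by linarith : (-1:ℝ) ≤ a - 1) hm
    have e : 1 + (a - 1) = a := by ring
    rwa [e] at h
  have h1a : 1 - a ≤ (1 - x) ^ 2 := by
    have h2x : (1 - x) + 1 ≤ Real.exp (1 - x) := Real.add_one_le_exp _
    have := mul_le_mul_of_nonneg_left h2x hx0
    nlinarith
  have ham : Real.exp (m * x - m) * a ^ m = x ^ m := by
    rw [ha_def, Real.mul_rpow hx0 (Real.exp_pos _).le, ← Real.exp_mul]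
    rw [← mul_assoc, mul_comm (Real.exp (m * x - m)) (x ^ m), mul_assoc, ← Real.exp_add]
    have e : (m * x - m) + (1 - x) * m = 0 := by ring
    rw [mul_comm (1-x) m] at e
    rw [show (1 - x) * m = m * (1 - x) by ring, show m * x - m + m * (1-x) = 0 by ring]
    simp
  have hupper : Real.exp (m * x - m) - x ^ m ≤ m * (1 - x) ^ 2 * Real.exp (m * x - m) := by
    have hb : 1 - a ^ m ≤ m * (1 - x) ^ 2 := by nlinarith
    have := mul_le_mul_of_nonneg_left hb (Real.exp_pos (m * x - m)).le
    calc Real.exp (m * x - m) - x ^ m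
        = Real.exp (m * x - m) * (1 - a ^ m) := by rw [mul_sub, mul_one, ham]
      _ ≤ Real.exp (m * x - m) * (m * (1 - x) ^ 2) := this
      _ = m * (1 - x) ^ 2 * Real.exp (m * x - m) := by ring
  have hC : m * (1 - x) ^ 2 * Real.exp (m * x - m) ≤
      16 / Real.exp 2 * m⁻¹ * Real.exp (-(m * (1 - x)) / 2) := by
    set t := m * (1 - x) with ht_def
    have ht : 0 ≤ t := mul_nonneg hm0.le (by linarith)
    have h5 : t ^ 2 * Real.exp (-(t/2)) ≤ 16 * Real.exp (-2) := by
      have := aux_t2 (t := t/2) (by positivity)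
      nlinarith
    have hE : Real.exp (m * x - m) = Real.exp (-(t/2)) * Real.exp (-(t/2)) := by
      rw [← Real.exp_add]; congr 1; rw [ht_def]; ring
    have hE2 : Real.exp (-(m * (1 - x)) / 2) = Real.exp (-(t/2)) := by
      congr 1; rw [ht_def]; ring
    have hfrac : 16 / Real.exp 2 = 16 * Real.exp (-2) := by
      rw [Real.exp_neg]; ring
    have hm1 : m * (1 - x) ^ 2 = t ^ 2 * m⁻¹ := by
      rw [ht_def]; field_simp
    rw [hE, hE2, hfrac, hm1]
    have h6 := mul_le_mul_of_nonneg_right h5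
      (show (0:ℝ) ≤ m⁻¹ * Real.exp (-(t/2)) by positivity)
    nlinarith [h6]
  rw [abs_sub_comm, abs_of_nonneg (by linarith : 0 ≤ Real.exp (m * x - m) - x ^ m)]
  linarith
open scoped ENNReal

lemma aux_lintegral (σ : ℝ) (hσ : 0 ≤ σ) (ν : Measure ℝ) [IsFiniteMeasure ν]
    (K : ℝ) (hK0 : 0 ≤ K)
    (hK : ∀ x ∈ Set.Ico (0:ℝ) 1, ν (Set.Ico x 1) ≤ ENNReal.ofReal (K * (1 - x) ^ σ))
    (m : ℝ) (hm : 1 ≤ m) :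
    ∫⁻ x in Set.Ico (0:ℝ) 1, ENNReal.ofReal (Real.exp (-(m * (1 - x)) / 2)) ∂ν
      ≤ ENNReal.ofReal (K * 2 ^ σ * Real.Gamma (σ + 1) * m ^ (-σ)) := by
  have hm0 : (0:ℝ) < m := lt_of_lt_of_le one_pos hm
  set r : ℝ := m / 2 with hr_def
  have hr : 0 < r := by positivity
  set c : ℝ → ℝ≥0∞ := fun s => ENNReal.ofReal (r * Real.exp (-(r * s))) with hc_def
  -- Step A : pointwise identity
  have stepA : ∀ x ∈ Set.Ico (0:ℝ) 1,
      ENNReal.ofReal (Real.exp (-(m * (1 - x)) / 2))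
        = ∫⁻ s in Set.Ioi (0:ℝ), (Set.Ioi (1 - x)).indicator c s := by
    intro x hx
    have ha : 0 < 1 - x := by linarith [hx.2]
    have hsub : Set.Ioi (1 - x) ⊆ Set.Ioi (0:ℝ) := fun y hy => lt_trans ha hy
    have hint : IntegrableOn (fun s : ℝ => r * Real.exp (-(r * s))) (Set.Ioi (1 - x)) := by
      have h0 := (exp_neg_integrableOn_Ioi (1 - x) hr).const_mul r
      simpa [neg_mul, IntegrableOn] using h0
    have hnn : 0 ≤ᵐ[volume.restrict (Set.Ioi (1 - x))] fun s => r * Real.exp (-(r * s)) :=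
      Filter.Eventually.of_forall fun s => by positivity
    have hval : ∫ s in Set.Ioi (1 - x), r * Real.exp (-(r * s))
        = Real.exp (-(m * (1 - x)) / 2) := by
      have h1 := integral_comp_mul_left_Ioi (fun u => Real.exp (-u)) (1 - x) hr
      rw [integral_exp_neg_Ioi] at h1
      rw [MeasureTheory.integral_const_mul, h1, smul_eq_mul, ← mul_assoc,
        mul_inv_cancel₀ hr.ne', one_mul]
      congr 1
      rw [hr_def]; ring
    rw [lintegral_indicator measurableSet_Ioi, Measure.restrict_restrict measurableSet_Ioi,
      Set.inter_eq_left.mpr hsub, hc_def, ← ofReal_integral_eq_lintegral_ofReal hint hnn, hval]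
  calc ∫⁻ x in Set.Ico (0:ℝ) 1, ENNReal.ofReal (Real.exp (-(m * (1 - x)) / 2)) ∂ν
      = ∫⁻ x in Set.Ico (0:ℝ) 1, ∫⁻ s in Set.Ioi (0:ℝ),
          (Set.Ioi (1 - x)).indicator c s ∂volume ∂ν :=
        setLIntegral_congr_fun measurableSet_Ico stepA
    _ = ∫⁻ s in Set.Ioi (0:ℝ), ∫⁻ x in Set.Ico (0:ℝ) 1,
          (Set.Ioi (1 - x)).indicator c s ∂ν ∂volume := by
        apply lintegral_lintegral_swap
        have hc_meas : Measurable c := by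
          apply ENNReal.measurable_ofReal.comp
          exact (continuous_const.mul (Real.continuous_exp.comp
            ((continuous_const.mul continuous_id).neg))).measurable
        have heq : (Function.uncurry fun (x : ℝ) (s : ℝ) => (Set.Ioi (1 - x)).indicator c s)
            = Set.indicator {p : ℝ × ℝ | 1 - p.1 < p.2} (fun p => c p.2) := by
          funext p
          simp only [Function.uncurry, Set.indicator_apply, Set.mem_Ioi, Set.mem_setOf_eq]
        rw [heq]
        refine ((hc_meas.comp measurable_snd).indicator ?_).aemeasurable
        exact (isOpen_lt (continuous_const.sub continuous_fst) continuous_snd).measurableSet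
    _ ≤ ∫⁻ s in Set.Ioi (0:ℝ), c s * ENNReal.ofReal (K * s ^ σ) ∂volume := by
        apply setLIntegral_mono' measurableSet_Ioi
        intro s hs
        have hs0 : (0:ℝ) < s := hs
        have hind : ∀ x : ℝ, (Set.Ioi (1 - x)).indicator c s
            = (Set.Ioi (1 - s)).indicator (fun _ => c s) x := by
          intro x
          simp only [Set.indicator_apply, Set.mem_Ioi]
          by_cases hxs : 1 - s < x
          · rw [if_pos (by linarith), if_pos hxs]
          · rw [if_neg (fun hy => hxs (by linarith)), if_neg hxs]
        calc ∫⁻ x in Set.Ico (0:ℝ) 1, (Set.Ioi (1 - x)).indicator c s ∂ν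
            = ∫⁻ x in Set.Ico (0:ℝ) 1, (Set.Ioi (1 - s)).indicator (fun _ => c s) x ∂ν := by
              exact lintegral_congr fun x => hind x
          _ = c s * ν (Set.Ioi (1 - s) ∩ Set.Ico 0 1) := by
              rw [lintegral_indicator_const measurableSet_Ioi,
                Measure.restrict_apply measurableSet_Ioi]
          _ ≤ c s * ENNReal.ofReal (K * s ^ σ) := by
              apply mul_le_mul_right
              rcases le_or_gt s 1 with hs1 | hs1
              · refine le_trans (measure_mono ?_) ((hK (1 - s) ⟨by linarith, by linarith⟩).trans ?_)
                · rintro y ⟨h1, _, h3⟩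
                  exact ⟨le_of_lt h1, h3⟩
                · apply ENNReal.ofReal_le_ofReal
                  rw [show (1:ℝ) - (1 - s) = s by ring]
              · refine le_trans (measure_mono Set.inter_subset_right) ?_
                refine le_trans (hK 0 ⟨le_refl _, one_pos⟩) ?_
                apply ENNReal.ofReal_le_ofReal
                rw [show (1:ℝ) - 0 = 1 by ring, Real.one_rpow]
                have h1s : (1:ℝ) ≤ s ^ σ := Real.one_le_rpow hs1.le hσ
                nlinarith
    _ ≤ ENNReal.ofReal (K * 2 ^ σ * Real.Gamma (σ + 1) * m ^ (-σ)) := by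
        have hrw : ∀ s ∈ Set.Ioi (0:ℝ), c s * ENNReal.ofReal (K * s ^ σ)
            = ENNReal.ofReal (r * K) * ENNReal.ofReal (s ^ σ * Real.exp (-(r * s))) := by
          intro s hs
          rw [hc_def, ← ENNReal.ofReal_mul (by positivity),
            ← ENNReal.ofReal_mul (by positivity)]
          congr 1
          ring
        rw [setLIntegral_congr_fun measurableSet_Ioi hrw,
          lintegral_const_mul' _ _ ENNReal.ofReal_ne_top]
        have hint2 : IntegrableOn (fun s : ℝ => s ^ σ * Real.exp (-(r * s))) (Set.Ioi 0) := by
          have h0 := integrableOn_rpow_mul_exp_neg_mul_rpow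
            (show (-1:ℝ) < σ by linarith) (show (0:ℝ) < 1 by norm_num) hr
          apply h0.congr_fun ?_ measurableSet_Ioi
          intro s hs
          simp only [Real.rpow_one, neg_mul]
        have hnn2 : 0 ≤ᵐ[volume.restrict (Set.Ioi (0:ℝ))]
            fun s => s ^ σ * Real.exp (-(r * s)) := by
          filter_upwards [ae_restrict_mem measurableSet_Ioi] with s hs
          have : (0:ℝ) < s := hs
          positivity
        rw [← ofReal_integral_eq_lintegral_ofReal hint2 hnn2]
        have hgamma : ∫ s in Set.Ioi (0:ℝ), s ^ σ * Real.exp (-(r * s))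
            = (1 / r) ^ (σ + 1) * Real.Gamma (σ + 1) := by
          have h0 := Real.integral_rpow_mul_exp_neg_mul_Ioi
            (show (0:ℝ) < σ + 1 by linarith) hr
          rw [show σ + 1 - 1 = σ by ring] at h0
          exact h0
        rw [hgamma, ← ENNReal.ofReal_mul (by positivity)]
        apply ENNReal.ofReal_le_ofReal
        have e2 : (1 / r : ℝ) ^ σ = 2 ^ σ * m ^ (-σ) := by
          rw [show (1 / r : ℝ) = 2 * m⁻¹ by rw [hr_def]; field_simp,
            Real.mul_rpow (by norm_num) (by positivity),
            Real.rpow_neg hm0.le, ← Real.inv_rpow hm0.le]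
        have e1 : (1 / r : ℝ) ^ (σ + 1) = (1 / r) ^ σ * (1 / r) := by
          rw [Real.rpow_add (by positivity), Real.rpow_one]
        rw [e1, e2]
        have hrr : r * (1 / r) = 1 := by field_simp
        have heq : r * K * (2 ^ σ * m ^ (-σ) * (1 / r) * Real.Gamma (σ + 1))
            = K * 2 ^ σ * Real.Gamma (σ + 1) * m ^ (-σ) * (r * (1 / r)) := by ring
        rw [heq, hrr, mul_one]

theorem moments_asymptotic_egf
    (σ : ℝ) (hσ : 0 ≤ σ)
    (ν : Measure ℝ) [IsFiniteMeasure ν] (hν : ν (Set.Ico (0:ℝ) 1)ᶜ = 0)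
    (h : ℝ → ℂ) (hmeas : Measurable h) (hmod : ∀ x, ‖h x‖ = 1)
    (K : ℝ) (hK : ∀ x ∈ Set.Ico (0:ℝ) 1, ν (Set.Ico x 1) ≤ ENNReal.ofReal (K * (1 - x) ^ σ)) :
    ∃ C : ℝ, ∃ m₀ : ℝ, ∀ m : ℝ, m₀ ≤ m →
      ‖(∫ x in Set.Ico (0:ℝ) 1, ((x ^ m : ℝ) : ℂ) * h x ∂ν) -
        (Real.exp (-m) : ℂ) * ∫ x in Set.Ico (0:ℝ) 1, ((Real.exp (m * x) : ℝ) : ℂ) * h x ∂ν‖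
        ≤ C * m ^ (-(1 + σ)) := by
  set K' : ℝ := max K 0 with hK'_def
  have hK'0 : 0 ≤ K' := le_max_right K 0
  have hK' : ∀ x ∈ Set.Ico (0:ℝ) 1, ν (Set.Ico x 1) ≤ ENNReal.ofReal (K' * (1 - x) ^ σ) := by
    intro x hx
    refine (hK x hx).trans (ENNReal.ofReal_le_ofReal ?_)
    exact mul_le_mul_of_nonneg_right (le_max_left K 0)
      (Real.rpow_nonneg (by linarith [hx.2]) σ)
  refine ⟨16 / Real.exp 2 * (K' * 2 ^ σ * Real.Gamma (σ + 1)), 1, fun m hm => ?_⟩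
  have hm0 : (0:ℝ) < m := lt_of_lt_of_le one_pos hm
  -- integrability of the two integrands
  have hsm1 : AEStronglyMeasurable (fun x : ℝ => ((x ^ m : ℝ) : ℂ) * h x)
      (ν.restrict (Set.Ico 0 1)) := by
    exact ((Complex.measurable_ofReal.comp
      (Real.continuous_rpow_const hm0.le).measurable).mul hmeas).aestronglyMeasurable
  have hsm2 : AEStronglyMeasurable (fun x : ℝ => ((Real.exp (m * x) : ℝ) : ℂ) * h x)
      (ν.restrict (Set.Ico 0 1)) := by
    exact ((Complex.measurable_ofReal.comp
      (Real.continuous_exp.comp (continuous_const.mul continuous_id)).measurable).mul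
      hmeas).aestronglyMeasurable
  have hint1 : Integrable (fun x : ℝ => ((x ^ m : ℝ) : ℂ) * h x) (ν.restrict (Set.Ico 0 1)) := by
    refine Integrable.mono' (integrable_const 1) hsm1 ?_
    filter_upwards [ae_restrict_mem measurableSet_Ico] with x hx
    rw [norm_mul, hmod, mul_one, Complex.norm_real, Real.norm_eq_abs,
      abs_of_nonneg (Real.rpow_nonneg hx.1 m)]
    exact Real.rpow_le_one hx.1 hx.2.le hm0.le
  have hint2 : Integrable (fun x : ℝ => ((Real.exp (m * x) : ℝ) : ℂ) * h x)
      (ν.restrict (Set.Ico 0 1)) := by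
    refine Integrable.mono' (integrable_const (Real.exp m)) hsm2 ?_
    filter_upwards [ae_restrict_mem measurableSet_Ico] with x hx
    rw [norm_mul, hmod, mul_one, Complex.norm_real, Real.norm_eq_abs,
      abs_of_nonneg (Real.exp_pos _).le]
    exact Real.exp_le_exp.mpr (by nlinarith [hx.1, hx.2])
  -- rewrite as a single integral
  have hsplit : (∫ x in Set.Ico (0:ℝ) 1, ((x ^ m : ℝ) : ℂ) * h x ∂ν) -
      (Real.exp (-m) : ℂ) * ∫ x in Set.Ico (0:ℝ) 1, ((Real.exp (m * x) : ℝ) : ℂ) * h x ∂ν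
      = ∫ x in Set.Ico (0:ℝ) 1,
          (((x ^ m : ℝ) : ℂ) * h x -
            (Real.exp (-m) : ℂ) * (((Real.exp (m * x) : ℝ) : ℂ) * h x)) ∂ν := by
    rw [← integral_const_mul, integral_sub hint1 (hint2.const_mul _)]
  rw [hsplit]
  -- bounding function
  set B : ℝ → ℝ := fun x => 16 / Real.exp 2 * m⁻¹ * Real.exp (-(m * (1 - x)) / 2) with hB_def
  have hBint : Integrable B (ν.restrict (Set.Ico 0 1)) := by
    refine Integrable.mono' (integrable_const (16 / Real.exp 2 * m⁻¹)) ?_ ?_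
    · have hc : Continuous B := by rw [hB_def]; fun_prop
      exact hc.aestronglyMeasurable
    · filter_upwards [ae_restrict_mem measurableSet_Ico] with x hx
      have hBx : B x = 16 / Real.exp 2 * m⁻¹ * Real.exp (-(m * (1 - x)) / 2) := rfl
      have hE1 : Real.exp (-(m * (1 - x)) / 2) ≤ 1 := by
        have : Real.exp (-(m * (1 - x)) / 2) ≤ Real.exp 0 :=
          Real.exp_le_exp.mpr (by nlinarith [hx.2, hm0])
        simpa using this
      have hpos : (0:ℝ) ≤ 16 / Real.exp 2 * m⁻¹ := by positivity
      rw [hBx, Real.norm_eq_abs, abs_of_nonneg (by positivity)]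
      nlinarith [hE1, hpos, Real.exp_pos (-(m * (1 - x)) / 2)]
  have hbound : ∀ᵐ x ∂(ν.restrict (Set.Ico 0 1)),
      ‖((x ^ m : ℝ) : ℂ) * h x -
        (Real.exp (-m) : ℂ) * (((Real.exp (m * x) : ℝ) : ℂ) * h x)‖ ≤ B x := by
    filter_upwards [ae_restrict_mem measurableSet_Ico] with x hx
    have hexp : ((Real.exp (-m) : ℝ) : ℂ) * ((Real.exp (m * x) : ℝ) : ℂ)
        = ((Real.exp (m * x - m) : ℝ) : ℂ) := by
      rw [← Complex.ofReal_mul, ← Real.exp_add, show -m + m * x = m * x - m from by ring]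
    have heq : ((x ^ m : ℝ) : ℂ) * h x -
        (Real.exp (-m) : ℂ) * (((Real.exp (m * x) : ℝ) : ℂ) * h x)
        = ((x ^ m - Real.exp (m * x - m) : ℝ) : ℂ) * h x := by
      rw [← mul_assoc, hexp, ← sub_mul, ← Complex.ofReal_sub]
    rw [heq, norm_mul, hmod, mul_one, Complex.norm_real, Real.norm_eq_abs]
    exact aux_pointwise hm hx.1 hx.2
  refine le_trans (norm_integral_le_of_norm_le hBint hbound) ?_
  -- evaluate / bound the integral of B
  have hBsplit : ∫ x in Set.Ico (0:ℝ) 1, B x ∂ν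
      = 16 / Real.exp 2 * m⁻¹ * ∫ x in Set.Ico (0:ℝ) 1, Real.exp (-(m * (1 - x)) / 2) ∂ν := by
    rw [hB_def, integral_const_mul]
  have hIB : ∫ x in Set.Ico (0:ℝ) 1, Real.exp (-(m * (1 - x)) / 2) ∂ν
      ≤ K' * 2 ^ σ * Real.Gamma (σ + 1) * m ^ (-σ) := by
    have hlin := aux_lintegral σ hσ ν K' hK'0 hK' m hm
    have hE : ∫ x in Set.Ico (0:ℝ) 1, Real.exp (-(m * (1 - x)) / 2) ∂ν
        = (∫⁻ x in Set.Ico (0:ℝ) 1, ENNReal.ofReal (Real.exp (-(m * (1 - x)) / 2)) ∂ν).toReal := by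
      have hc2 : Continuous fun x : ℝ => Real.exp (-(m * (1 - x)) / 2) := by fun_prop
      rw [integral_eq_lintegral_of_nonneg_ae
        (Filter.Eventually.of_forall fun x => (Real.exp_pos _).le)
        hc2.aestronglyMeasurable]
    rw [hE]
    refine ENNReal.toReal_le_of_le_ofReal ?_ hlin
    have hG : 0 ≤ Real.Gamma (σ + 1) := Real.Gamma_nonneg_of_nonneg (by linarith)
    positivity
  rw [hBsplit]
  have hrpow : m ^ (-(1 + σ)) = m⁻¹ * m ^ (-σ) := by
    rw [show -(1 + σ) = -1 + -σ by ring, Real.rpow_add hm0, Real.rpow_neg_one]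
  rw [hrpow]
  have hc0 : (0:ℝ) ≤ 16 / Real.exp 2 * m⁻¹ := by positivity
  calc 16 / Real.exp 2 * m⁻¹ * ∫ x in Set.Ico (0:ℝ) 1, Real.exp (-(m * (1 - x)) / 2) ∂ν
      ≤ 16 / Real.exp 2 * m⁻¹ * (K' * 2 ^ σ * Real.Gamma (σ + 1) * m ^ (-σ)) :=
        mul_le_mul_of_nonneg_left hIB hc0
    _ = 16 / Real.exp 2 * (K' * 2 ^ σ * Real.Gamma (σ + 1)) * (m⁻¹ * m ^ (-σ)) := by ring
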